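/- Define R(p, l) = 2p·l·(1-p)^{l-1} + (1-p)^{2l} − 1. For every natural number l ≥ 3 and every real p with 2/(l+2) ≤ p < 1, we have R(p, l) ≤ 0. -/

import Mathlib

lemma amgm_pow (n : ℕ) (hn : 1 ≤ n) {a b : ℝ} (ha : 0 ≤ a) (hb : 0 ≤ b) :
    a * b ^ (n - 1) ≤ ((a + ((n : ℝ) - 1) * b) / n) ^ n := by
  have hn1 : (1 : ℝ) ≤ (n : ℝ) := by exact_mod_cast hn
  have hn0 : (0 : ℝ) < (n : ℝ) := by linarith
  rcases hb.eq_or_lt with hb0 | hb0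
  · rcases Nat.eq_or_lt_of_le hn with h1 | h2
    · subst h1
      simp
    · have hne : n - 1 ≠ 0 := by omega
      rw [← hb0, zero_pow hne, mul_zero]
      have : (0:ℝ) ≤ (a + ((n : ℝ) - 1) * 0) / n := by
        rw [mul_zero, add_zero]
        positivity
      positivity
  · have hx2 : (-2 : ℝ) ≤ (a - b) / ((n : ℝ) * b) := by
      rw [le_div_iff₀ (by positivity)]
      nlinarith [mul_nonneg (by linarith : (0:ℝ) ≤ (n:ℝ) - 1) hb0.le]
    have hber := one_add_mul_le_pow hx2 n
    have e1 : 1 + (n : ℝ) * ((a - b) / ((n : ℝ) * b)) = a / b := by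
      field_simp
      ring
    have e2 : 1 + (a - b) / ((n : ℝ) * b) = (a + ((n : ℝ) - 1) * b) / ((n : ℝ) * b) := by
      field_simp
      ring
    rw [e1, e2] at hber
    have hnn : n - 1 + 1 = n := by omega
    calc a * b ^ (n - 1) = (a / b) * b ^ n := by
          rw [← hnn, pow_succ]
          field_simp
          simp
      _ ≤ ((a + ((n : ℝ) - 1) * b) / ((n : ℝ) * b)) ^ n * b ^ n := by
          exact mul_le_mul_of_nonneg_right hber (pow_nonneg hb n)
      _ = ((a + ((n : ℝ) - 1) * b) / n) ^ n := by
          rw [← mul_pow]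
          congr 1
          field_simp

lemma sBound (l : ℕ) (hl : 3 ≤ l) : ((l : ℝ) / ((l : ℝ) + 2)) ^ l ≤ 27 / 125 := by
  induction l, hl using Nat.le_induction with
  | base => norm_num
  | succ n hn ih =>
    have hN : (3 : ℝ) ≤ (n : ℝ) := by exact_mod_cast hn
    set N : ℝ := (n : ℝ) with hNdef
    have hN0 : (0 : ℝ) < N := by linarith
    set y : ℝ := 2 / (N ^ 2 + 3 * N) with hydef
    have hy0 : 0 < y := by positivity
    have hy1 : y ≤ 1 / 9 := by
      rw [hydef, div_le_div_iff₀ (by positivity) (by norm_num)]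
      nlinarith
    have k1 : 1 - N * y = (N + 1) / (N + 3) := by
      rw [hydef]
      field_simp
      ring
    have k4 : (0:ℝ) < 1 - N * y := by
      rw [k1]; positivity
    have k2 : 1 - N * y ≤ (1 - y) ^ n := by
      have := one_add_mul_le_pow (by linarith : (-2:ℝ) ≤ -y) n
      calc 1 - N * y = 1 + (n:ℝ) * (-y) := by rw [hNdef]; ring
        _ ≤ (1 + -y) ^ n := this
        _ = (1 - y) ^ n := by ring_nf
    have k3 : (1 + y) ^ n * (1 - y) ^ n ≤ 1 := by
      rw [← mul_pow]
      apply pow_le_one₀ (by nlinarith) (by nlinarith)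
    have k5 : (1 + y) ^ n ≤ (N + 3) / (N + 1) := by
      have h5 : (1 + y) ^ n * (1 - N * y) ≤ 1 := by
        calc (1 + y) ^ n * (1 - N * y) ≤ (1 + y) ^ n * (1 - y) ^ n :=
              mul_le_mul_of_nonneg_left k2 (by positivity)
          _ ≤ 1 := k3
      rw [← le_div_iff₀ k4] at h5
      calc (1 + y) ^ n ≤ 1 / (1 - N * y) := h5
        _ = (N + 3) / (N + 1) := by rw [k1, one_div_div]
    have k6 : (N + 1) / (N + 3) = (N / (N + 2)) * (1 + y) := by
      rw [hydef]
      field_simp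
      ring
    have hstep : ((N + 1) / ((N + 1) + 2)) ^ (n + 1) ≤ (N / (N + 2)) ^ n := by
      have e3 : (N + 1) + 2 = N + 3 := by ring
      rw [e3]
      calc ((N + 1) / (N + 3)) ^ (n + 1)
          = ((N + 1) / (N + 3)) * ((N + 1) / (N + 3)) ^ n := by rw [pow_succ]; ring
        _ = ((N + 1) / (N + 3)) * ((N / (N + 2)) ^ n * (1 + y) ^ n) := by
            rw [k6, mul_pow]
        _ ≤ ((N + 1) / (N + 3)) * ((N / (N + 2)) ^ n * ((N + 3) / (N + 1))) := by
            apply mul_le_mul_of_nonneg_left _ (by positivity)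
            exact mul_le_mul_of_nonneg_left k5 (by positivity)
        _ = (N / (N + 2)) ^ n := by
            field_simp
    calc ((↑(n + 1) : ℝ) / (↑(n + 1) + 2)) ^ (n + 1)
        = ((N + 1) / ((N + 1) + 2)) ^ (n + 1) := by rw [hNdef]; push_cast; ring_nf
      _ ≤ (N / (N + 2)) ^ n := hstep
      _ ≤ 27 / 125 := ih

theorem R_nonpos (l : ℕ) (hl : 3 ≤ l) (p : ℝ)
    (hp : 2 / ((l : ℝ) + 2) ≤ p) (hp1 : p < 1) :
    2 * p * (l : ℝ) * (1 - p) ^ (l - 1) + (1 - p) ^ (2 * l) - 1 ≤ 0 := by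
  have hL : (3 : ℝ) ≤ (l : ℝ) := by exact_mod_cast hl
  set L : ℝ := (l : ℝ) with hLdef
  have hL0 : (0 : ℝ) < L := by linarith
  have hL2 : (0 : ℝ) < L + 2 := by linarith
  have hp0 : 0 < p := lt_of_lt_of_le (by positivity) hp
  have hq0 : 0 ≤ 1 - p := by linarith
  have hp' : 2 ≤ p * (L + 2) := by
    rw [div_le_iff₀ hL2] at hp; linarith
  have hqr : 1 - p ≤ L / (L + 2) := by
    rw [le_div_iff₀ hL2]
    nlinarith
  set s : ℝ := (L / (L + 2)) ^ l with hsdef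
  have hs0 : 0 ≤ s := by positivity
  have hsC : s ≤ 27 / 125 := sBound l hl
  -- Step A
  have h1 := amgm_pow l (by omega) (a := L / 2 * p) (b := 1 - p)
    (by positivity) hq0
  have hin : (L / 2 * p + (L - 1) * (1 - p)) / L ≤ L / (L + 2) := by
    rw [div_le_div_iff₀ hL0 hL2]
    nlinarith [mul_le_mul_of_nonneg_left hp' (show (0:ℝ) ≤ (L - 2) / 2 by linarith)]
  have hin0 : 0 ≤ (L / 2 * p + (L - 1) * (1 - p)) / L := by
    apply div_nonneg _ hL0.le
    nlinarith
  have hA : L / 2 * p * (1 - p) ^ (l - 1) ≤ s := by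
    calc L / 2 * p * (1 - p) ^ (l - 1)
        ≤ ((L / 2 * p + (L - 1) * (1 - p)) / L) ^ l := h1
      _ ≤ (L / (L + 2)) ^ l := pow_le_pow_left₀ hin0 hin l
  have hA' : 2 * p * L * (1 - p) ^ (l - 1) ≤ 4 * s := by nlinarith [hA]
  -- Step B
  have hB : (1 - p) ^ (2 * l) ≤ s ^ 2 := by
    calc (1 - p) ^ (2 * l) ≤ (L / (L + 2)) ^ (2 * l) := pow_le_pow_left₀ hq0 hqr (2 * l)
      _ = s ^ 2 := by rw [hsdef, ← pow_mul, mul_comm]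
  nlinarith [hA', hB, hsC, hs0]
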